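/- Under the Setup, suppose Assumption 3' holds: for each support point θ* ∈ S(p,Θ_I) there exist constants η > 0 and C > 0 such that Q(θ) ≥ C·d(θ,Θ_I) for all θ ∈ B(θ*,η). Then for every support point θ* ∈ S(p,Θ_I), the linearized cone is contained in the tangent cone, L(θ*) ⊆ T(θ*); combined with the standard inclusion T(θ*) ⊆ L(θ*) (valid under continuous differentiability), this yields the Abadie constraint qualification L(θ*) = T(θ*) at every support point. -/

import Mathlib

open Filter Topology Metric RealInnerProductSpace

noncomputable section

/-- The abstract Setup (Assumption 1) of Kaido–Molinari–Stoye: a compact convex parameter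
space `Θ ⊆ ℝ^d` with nonempty interior, `J` continuously differentiable constraint
functions `g j` (inequality constraints for `j < J1`, equality constraints for
`J1 ≤ j`), with (continuous) gradients `D j`, and a direction of projection `p ≠ 0`. -/
structure PISetup (d J J1 : ℕ) where
  Θ : Set (EuclideanSpace ℝ (Fin d))
  g : Fin J → EuclideanSpace ℝ (Fin d) → ℝ
  D : Fin J → EuclideanSpace ℝ (Fin d) → EuclideanSpace ℝ (Fin d)
  p : EuclideanSpace ℝ (Fin d)
  hd : 1 ≤ d
  hJ : 1 ≤ J
  hJ1 : J1 ≤ J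
  compactΘ : IsCompact Θ
  convexΘ : Convex ℝ Θ
  intΘ_nonempty : (interior Θ).Nonempty
  hgrad : ∀ (j : Fin J) (θ : EuclideanSpace ℝ (Fin d)), HasGradientAt (g j) (D j θ) θ
  hgradCont : ∀ j : Fin J, Continuous (D j)
  hp : p ≠ 0

namespace PISetup

variable {d J J1 : ℕ}

/-- The identified set `Θ_I`. -/
def idSet (S : PISetup d J J1) : Set (EuclideanSpace ℝ (Fin d)) :=
  {θ ∈ S.Θ | ∀ j : Fin J, ((j : ℕ) < J1 → S.g j θ ≤ 0) ∧ (J1 ≤ (j : ℕ) → S.g j θ = 0)}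

/-- The support set `S(p, Θ_I)`: the maximizers of `θ ↦ ⟪p, θ⟫` over `Θ_I`. -/
def suppSet (S : PISetup d J J1) : Set (EuclideanSpace ℝ (Fin d)) :=
  {θ ∈ S.idSet | ∀ θ' ∈ S.idSet, ⟪S.p, θ'⟫ ≤ ⟪S.p, θ⟫}

/-- The criterion `Q(θ) = max{0, max_{j< J1} g_j(θ), max_{J1 ≤ j} |g_j(θ)|}`. -/
def crit (S : PISetup d J J1) (θ : EuclideanSpace ℝ (Fin d)) : ℝ :=
  max 0 (⨆ j : Fin J, if (j : ℕ) < J1 then S.g j θ else |S.g j θ|)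

/-- The ball `B(θ*, η) = {θ ∈ Θ : ‖θ - θ*‖ ≤ η}`. -/
def ball (S : PISetup d J J1) (θs : EuclideanSpace ℝ (Fin d)) (η : ℝ) :
    Set (EuclideanSpace ℝ (Fin d)) :=
  {θ ∈ S.Θ | ‖θ - θs‖ ≤ η}

/-- The supporting hyperplane `H(p, Θ_I)`, described relative to a support point `θ*`. -/
def hyper (S : PISetup d J J1) (θs : EuclideanSpace ℝ (Fin d)) :
    Set (EuclideanSpace ℝ (Fin d)) :=
  {θ ∈ S.Θ | ⟪S.p, θ⟫ = ⟪S.p, θs⟫}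

/-- The tangent cone `T(θ*)` to `Θ_I` at `θ*`. -/
def tangentConeAt (S : PISetup d J J1) (θs : EuclideanSpace ℝ (Fin d)) :
    Set (EuclideanSpace ℝ (Fin d)) :=
  insert 0 {t | ∃ u : ℕ → EuclideanSpace ℝ (Fin d),
    (∀ n, u n ∈ S.idSet ∧ u n ≠ θs) ∧ Tendsto u atTop (𝓝 θs) ∧
    Tendsto (fun n => ‖u n - θs‖⁻¹ • (u n - θs)) atTop (𝓝 (‖t‖⁻¹ • t))}

/-- The linearized cone `L(θ*)`. -/
def linConeAt (S : PISetup d J J1) (θs : EuclideanSpace ℝ (Fin d)) :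
    Set (EuclideanSpace ℝ (Fin d)) :=
  {t | (∀ j : Fin J, (j : ℕ) < J1 → S.g j θs = 0 → ⟪S.D j θs, t⟫ ≤ 0) ∧
       (∀ j : Fin J, J1 ≤ (j : ℕ) → ⟪S.D j θs, t⟫ = 0)}

/-- The active set `J*(θ)` of (equality or inequality) constraints. -/
def activeAt (S : PISetup d J J1) (θ : EuclideanSpace ℝ (Fin d)) : Set (Fin J) :=
  {j | ((j : ℕ) < J1 ∧ S.g j θ = 0) ∨ J1 ≤ (j : ℕ)}

end PISetup

namespace PIAux

open Filter Topology Metric RealInnerProductSpace PISetup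

variable {d J J1 : ℕ} (S : PISetup d J J1)

lemma g_cont (j : Fin J) : Continuous (S.g j) :=
  continuous_iff_continuousAt.2 fun θ => (S.hgrad j θ).hasFDerivAt.continuousAt

lemma idSet_closed : IsClosed S.idSet := by
  have h1 : S.idSet = S.Θ ∩ ⋂ j : Fin J,
      ({θ | (j : ℕ) < J1 → S.g j θ ≤ 0} ∩ {θ | J1 ≤ (j : ℕ) → S.g j θ = 0}) := by
    ext θ
    simp only [PISetup.idSet, Set.mem_setOf_eq, Set.mem_inter_iff, Set.mem_iInter]
  rw [h1]
  refine S.compactΘ.isClosed.inter (isClosed_iInter fun j => IsClosed.inter ?_ ?_)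
  · by_cases h : (j : ℕ) < J1
    · have : {θ | (j : ℕ) < J1 → S.g j θ ≤ 0} = {θ | S.g j θ ≤ 0} := by
        ext θ; simp [h]
      rw [this]
      exact isClosed_le (g_cont S j) continuous_const
    · have : {θ | (j : ℕ) < J1 → S.g j θ ≤ 0} = Set.univ := by
        ext θ; simp [h]
      rw [this]; exact isClosed_univ
  · by_cases h : J1 ≤ (j : ℕ)
    · have : {θ | J1 ≤ (j : ℕ) → S.g j θ = 0} = {θ | S.g j θ = 0} := by
        ext θ; simp [h]
      rw [this]
      exact isClosed_eq (g_cont S j) continuous_const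
    · have : {θ | J1 ≤ (j : ℕ) → S.g j θ = 0} = Set.univ := by
        ext θ; simp [h]
      rw [this]; exact isClosed_univ

lemma idSet_compact : IsCompact S.idSet :=
  S.compactΘ.of_isClosed_subset (idSet_closed S) (fun _ hθ => hθ.1)

lemma hasDerivAt_line (j : Fin J) (θs t : EuclideanSpace ℝ (Fin d)) :
    HasDerivAt (fun τ : ℝ => S.g j (θs + τ • t)) ⟪S.D j θs, t⟫ 0 := by
  have hline : HasDerivAt (fun τ : ℝ => θs + τ • t) t (0 : ℝ) := by
    simpa using ((hasDerivAt_id (0 : ℝ)).smul_const t).const_add θs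
  have h0 : θs + (0 : ℝ) • t = θs := by simp
  have key : HasDerivAt (fun τ : ℝ => S.g j (θs + τ • t))
      ((InnerProductSpace.toDual ℝ (EuclideanSpace ℝ (Fin d)) (S.D j θs)) t) 0 := by
    refine HasFDerivAt.comp_hasDerivAt _ ?_ hline
    rw [h0]; exact (S.hgrad j θs).hasFDerivAt
  simpa [InnerProductSpace.toDual_apply_apply] using key

lemma TsubL (θs : EuclideanSpace ℝ (Fin d)) (_hθsI : θs ∈ S.idSet) :
    S.tangentConeAt θs ⊆ S.linConeAt θs := by
  intro t ht
  by_cases ht0 : t = 0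
  · subst ht0
    exact ⟨fun j _ _ => by simp, fun j _ => by simp⟩
  obtain ⟨u, hu, hlim, hdir⟩ := (Set.mem_insert_iff.1 ht).resolve_left ht0
  have htn : ‖t‖ ≠ 0 := norm_ne_zero_iff.2 ht0
  set w := ‖t‖⁻¹ • t with hw
  have htw : t = ‖t‖ • w := (smul_inv_smul₀ htn t).symm
  have hinner : ∀ j : Fin J, Tendsto (fun n => ⟪S.D j θs, ‖u n - θs‖⁻¹ • (u n - θs)⟫) atTop
      (𝓝 ⟪S.D j θs, w⟫) := fun j => tendsto_const_nhds.inner hdir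
  have hbound : ∀ j : Fin J, S.g j θs = 0 → ∀ c > (0:ℝ),
      ∀ᶠ n in atTop, |S.g j (u n) - ⟪S.D j θs, u n - θs⟫| ≤ c * ‖u n - θs‖ := by
    intro j hj0 c hc
    have hlo := ((S.hgrad j θs).hasFDerivAt.isLittleO).comp_tendsto hlim
    rw [Asymptotics.isLittleO_iff] at hlo
    filter_upwards [hlo hc] with n hn
    simpa [hj0, InnerProductSpace.toDual_apply_apply, Real.norm_eq_abs] using hn
  constructor
  · intro j _hjlt hj0
    have hwle : ⟪S.D j θs, w⟫ ≤ 0 := by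
      by_contra hlt
      push_neg at hlt
      have hkey : ⟪S.D j θs, w⟫ ≤ ⟪S.D j θs, w⟫ / 2 := by
        refine le_of_tendsto (hinner j) ?_
        filter_upwards [hbound j hj0 _ (half_pos hlt)] with n hn
        have hne : u n - θs ≠ 0 := sub_ne_zero.2 (hu n).2
        have hpos : (0:ℝ) < ‖u n - θs‖ := norm_pos_iff.2 hne
        have hgle : S.g j (u n) ≤ 0 := ((hu n).1.2 j).1 _hjlt
        have h1 : ⟪S.D j θs, u n - θs⟫ ≤ ⟪S.D j θs, w⟫ / 2 * ‖u n - θs‖ := by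
          have := (abs_le.1 hn).1
          linarith
        rw [real_inner_smul_right]
        calc ‖u n - θs‖⁻¹ * ⟪S.D j θs, u n - θs⟫
            ≤ ‖u n - θs‖⁻¹ * (⟪S.D j θs, w⟫ / 2 * ‖u n - θs‖) :=
              mul_le_mul_of_nonneg_left h1 (inv_nonneg.2 hpos.le)
          _ = ⟪S.D j θs, w⟫ / 2 := by field_simp
      linarith
    rw [htw, real_inner_smul_right]
    exact mul_nonpos_of_nonneg_of_nonpos (norm_nonneg t) hwle
  · intro j hjle
    have hwabs : ∀ c > (0:ℝ), |⟪S.D j θs, w⟫| ≤ c := by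
      intro c hc
      refine le_of_tendsto ((hinner j).abs) ?_
      filter_upwards [hbound j (_hθsI.2 j |>.2 hjle) _ hc] with n hn
      have hne : u n - θs ≠ 0 := sub_ne_zero.2 (hu n).2
      have hpos : (0:ℝ) < ‖u n - θs‖ := norm_pos_iff.2 hne
      have hg0 : S.g j (u n) = 0 := ((hu n).1.2 j).2 hjle
      rw [hg0, zero_sub, abs_neg] at hn
      rw [real_inner_smul_right, abs_mul, abs_inv, abs_norm]
      calc ‖u n - θs‖⁻¹ * |⟪S.D j θs, u n - θs⟫|
          ≤ ‖u n - θs‖⁻¹ * (c * ‖u n - θs‖) := by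
            refine mul_le_mul_of_nonneg_left ?_ (inv_nonneg.2 hpos.le)
            simpa [abs_sub_comm] using hn
        _ = c := by field_simp
    have hw0 : ⟪S.D j θs, w⟫ = 0 := by
      by_contra hne
      have habs : (0:ℝ) < |⟪S.D j θs, w⟫| := abs_pos.2 hne
      have := hwabs _ (half_pos habs)
      linarith
    rw [htw, real_inner_smul_right, hw0, mul_zero]

lemma LsubT (θs : EuclideanSpace ℝ (Fin d)) (hθsI : θs ∈ S.idSet)
    (hIne : S.idSet.Nonempty) (hint : θs ∈ interior S.Θ)
    (η C : ℝ) (hη : 0 < η) (hC : 0 < C)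
    (hcrit : ∀ θ ∈ S.ball θs η, S.crit θ ≥ C * infDist θ S.idSet) :
    S.linConeAt θs ⊆ S.tangentConeAt θs := by
  intro t htL
  by_cases ht0 : t = 0
  · exact Set.mem_insert_iff.2 (Or.inl ht0)
  haveI : Nonempty (Fin J) := ⟨⟨0, S.hJ⟩⟩
  have htn : (0:ℝ) < ‖t‖ := norm_pos_iff.2 ht0
  choose u hu hud using fun τ : ℝ =>
    (idSet_compact S).exists_infDist_eq_dist hIne (θs + τ • t)
  have hlinec : Tendsto (fun τ : ℝ => θs + τ • t) (𝓝 0) (𝓝 θs) := by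
    have hc : Continuous (fun τ : ℝ => θs + τ • t) :=
      continuous_const.add (continuous_id.smul continuous_const)
    simpa using hc.tendsto 0
  have hInΘ : ∀ᶠ τ in 𝓝[>] (0:ℝ), θs + τ • t ∈ S.Θ := by
    have h1 := hlinec.eventually (isOpen_interior.mem_nhds hint)
    exact (h1.filter_mono nhdsWithin_le_nhds).mono fun τ hτ => interior_subset hτ
  have hball : ∀ᶠ τ in 𝓝[>] (0:ℝ), ‖(θs + τ • t) - θs‖ ≤ η := by
    have h1 : Tendsto (fun τ : ℝ => ‖(θs + τ • t) - θs‖) (𝓝 0) (𝓝 0) := by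
      have h2 : Tendsto (fun τ : ℝ => (θs + τ • t) - θs) (𝓝 0) (𝓝 (θs - θs)) :=
        hlinec.sub tendsto_const_nhds
      rw [sub_self] at h2
      simpa using h2.norm
    exact ((h1.eventually_lt_const hη).mono fun τ h => h.le).filter_mono nhdsWithin_le_nhds
  have hgs : Tendsto (fun τ : ℝ => τ) (𝓝[>] (0:ℝ)) (𝓝 0) :=
    tendsto_id.mono_right nhdsWithin_le_nhds
  have hslope : ∀ j : Fin J, Tendsto (fun τ : ℝ => (S.g j (θs + τ • t) - S.g j θs) / τ)
      (𝓝[>] (0:ℝ)) (𝓝 ⟪S.D j θs, t⟫) := by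
    intro j
    have hder := hasDerivAt_line S j θs t
    rw [hasDerivAt_iff_tendsto_slope] at hder
    have hmono : 𝓝[>] (0:ℝ) ≤ 𝓝[≠] (0:ℝ) :=
      nhdsWithin_mono 0 fun x hx => ne_of_gt hx
    refine (hder.mono_left hmono).congr' ?_
    filter_upwards [self_mem_nhdsWithin] with τ hτ
    rw [slope_def_field]
    simp
  have hsmall : ∀ ε > (0:ℝ), ∀ᶠ τ in 𝓝[>] (0:ℝ), dist (θs + τ • t) (u τ) ≤ ε * τ := by
    intro ε hε
    have hjb : ∀ᶠ τ in 𝓝[>] (0:ℝ), ∀ j : Fin J,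
        (if (j : ℕ) < J1 then S.g j (θs + τ • t) else |S.g j (θs + τ • t)|) ≤ C * ε * τ := by
      rw [eventually_all]
      intro j
      by_cases hjlt : (j : ℕ) < J1
      · rcases lt_or_eq_of_le ((hθsI.2 j).1 hjlt) with hneg | h0
        · have hev : ∀ᶠ τ in 𝓝 (0:ℝ), S.g j (θs + τ • t) < 0 := by
            have hcont : Tendsto (fun τ : ℝ => S.g j (θs + τ • t)) (𝓝 0) (𝓝 (S.g j θs)) :=
              ((g_cont S j).tendsto θs).comp hlinec
            exact hcont.eventually_lt_const hneg
          filter_upwards [hev.filter_mono nhdsWithin_le_nhds, self_mem_nhdsWithin]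
            with τ h1 h2
          rw [if_pos hjlt]
          have h3 : (0:ℝ) < τ := h2
          have : (0:ℝ) ≤ C * ε * τ := (mul_pos (mul_pos hC hε) h3).le
          linarith
        · have hle : ⟪S.D j θs, t⟫ ≤ 0 := htL.1 j hjlt h0
          have hev := (hslope j).eventually_lt_const
            (lt_of_le_of_lt hle (mul_pos hC hε))
          filter_upwards [hev, self_mem_nhdsWithin] with τ h1 h2
          rw [if_pos hjlt]
          have h3 : (0:ℝ) < τ := h2
          rw [h0, sub_zero, div_lt_iff₀ h3] at h1
          linarith
      · have hDt : ⟪S.D j θs, t⟫ = 0 := htL.2 j (le_of_not_gt hjlt)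
        have hg0 : S.g j θs = 0 := (hθsI.2 j).2 (le_of_not_gt hjlt)
        have hsj := hslope j
        rw [hDt] at hsj
        have hev := (hsj.abs).eventually_lt_const
          (by simpa using mul_pos hC hε)
        filter_upwards [hev, self_mem_nhdsWithin] with τ h1 h2
        rw [if_neg hjlt]
        have h3 : (0:ℝ) < τ := h2
        rw [hg0, sub_zero, abs_div, abs_of_pos h3, div_lt_iff₀ h3] at h1
        linarith
    filter_upwards [hjb, hInΘ, hball, self_mem_nhdsWithin] with τ hjτ hΘτ hbτ hτpos
    have hτ0 : (0:ℝ) < τ := hτpos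
    have hcritle : S.crit (θs + τ • t) ≤ C * ε * τ := by
      simp only [PISetup.crit]
      exact max_le (mul_pos (mul_pos hC hε) hτ0).le (ciSup_le fun j => hjτ j)
    have h2 := hcrit _ ⟨hΘτ, hbτ⟩
    have h3 : infDist (θs + τ • t) S.idSet ≤ ε * τ := by
      have h4 : C * infDist (θs + τ • t) S.idSet ≤ C * (ε * τ) := by
        calc C * infDist (θs + τ • t) S.idSet ≤ S.crit (θs + τ • t) := h2
          _ ≤ C * ε * τ := hcritle
          _ = C * (ε * τ) := by ring
      exact le_of_mul_le_mul_left h4 hC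
    rw [hud τ] at h3
    exact h3
  have hdist0 : Tendsto (fun τ => dist (θs + τ • t) (u τ) / τ) (𝓝[>] (0:ℝ)) (𝓝 0) := by
    rw [tendsto_order]
    constructor
    · intro a ha
      filter_upwards [self_mem_nhdsWithin] with τ hτ
      have h1 : (0:ℝ) < τ := hτ
      exact lt_of_lt_of_le ha (div_nonneg dist_nonneg h1.le)
    · intro a ha
      filter_upwards [hsmall (a / 2) (half_pos ha), self_mem_nhdsWithin] with τ h1 h2
      have h3 : (0:ℝ) < τ := h2
      rw [div_lt_iff₀ h3]
      calc dist (θs + τ • t) (u τ) ≤ a / 2 * τ := h1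
        _ < a * τ := by nlinarith
  have hv : Tendsto (fun τ : ℝ => τ⁻¹ • (u τ - θs)) (𝓝[>] (0:ℝ)) (𝓝 t) := by
    rw [tendsto_iff_norm_sub_tendsto_zero]
    refine hdist0.congr' ?_
    filter_upwards [self_mem_nhdsWithin] with τ hτ
    have hτ0 : (0:ℝ) < τ := hτ
    have h1 : τ⁻¹ • (u τ - θs) - t = τ⁻¹ • (u τ - (θs + τ • t)) := by
      have h2 : u τ - (θs + τ • t) = (u τ - θs) - τ • t := by abel
      rw [h2]
      conv_rhs => rw [smul_sub, inv_smul_smul₀ (ne_of_gt hτ0)]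
    rw [dist_comm, dist_eq_norm, h1, norm_smul, Real.norm_eq_abs, abs_inv,
      abs_of_pos hτ0, div_eq_inv_mul]
  have hulim : Tendsto u (𝓝[>] (0:ℝ)) (𝓝 θs) := by
    have h4 : Tendsto (fun τ : ℝ => θs + τ • (τ⁻¹ • (u τ - θs))) (𝓝[>] (0:ℝ))
        (𝓝 (θs + (0:ℝ) • t)) := tendsto_const_nhds.add (hgs.smul hv)
    rw [zero_smul, add_zero] at h4
    refine h4.congr' ?_
    filter_upwards [self_mem_nhdsWithin] with τ hτ
    rw [smul_inv_smul₀ (ne_of_gt (show (0:ℝ) < τ from hτ)), add_sub_cancel]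
  have hune : ∀ᶠ τ in 𝓝[>] (0:ℝ), u τ ≠ θs := by
    have h1 := (hv.norm).eventually_const_lt (half_lt_self htn)
    filter_upwards [h1] with τ h2 h3
    rw [h3, sub_self, smul_zero, norm_zero] at h2
    linarith
  have hφ : Tendsto (fun τ => ‖u τ - θs‖⁻¹ • (u τ - θs)) (𝓝[>] (0:ℝ))
      (𝓝 (‖t‖⁻¹ • t)) := by
    have hcont : ContinuousAt (fun x : EuclideanSpace ℝ (Fin d) => ‖x‖⁻¹ • x) t := by
      exact (continuousAt_id.norm.inv₀ (ne_of_gt htn)).smul continuousAt_id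
    have h5 := hcont.tendsto.comp hv
    refine h5.congr' ?_
    filter_upwards [self_mem_nhdsWithin, hune] with τ hτ hneτ
    have hτ0 : (0:ℝ) < τ := hτ
    have hx : u τ - θs ≠ 0 := sub_ne_zero.2 hneτ
    have hxn : (0:ℝ) < ‖u τ - θs‖ := norm_pos_iff.2 hx
    simp only [Function.comp]
    rw [norm_smul, Real.norm_eq_abs, abs_inv, abs_of_pos hτ0, smul_smul]
    congr 1
    rw [mul_inv, inv_inv, mul_comm τ, mul_assoc, mul_inv_cancel₀ hτ0.ne', mul_one]
  obtain ⟨δ, hδ0, hδ⟩ := mem_nhdsGT_iff_exists_Ioc_subset.1 hune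
  have hδpos : (0:ℝ) < δ := hδ0
  set s : ℕ → ℝ := fun n => δ / (n + 1) with hs_def
  have hsmem : ∀ n, s n ∈ Set.Ioc (0:ℝ) δ := by
    intro n
    constructor
    · positivity
    · apply div_le_self hδpos.le
      have : (0:ℝ) ≤ (n : ℝ) := Nat.cast_nonneg n
      linarith
  have hs : Tendsto s atTop (𝓝[>] (0:ℝ)) := by
    apply tendsto_nhdsWithin_of_tendsto_nhds_of_eventually_within
    · have h6 : Tendsto (fun n : ℕ => δ * (1 / ((n : ℝ) + 1))) atTop (𝓝 (δ * 0)) :=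
        tendsto_const_nhds.mul tendsto_one_div_add_atTop_nhds_zero_nat
      rw [mul_zero] at h6
      refine h6.congr fun n => ?_
      rw [hs_def, mul_one_div]
    · exact Filter.Eventually.of_forall fun n => (hsmem n).1
  refine Set.mem_insert_iff.2 (Or.inr ⟨u ∘ s, fun n => ⟨hu (s n), hδ (hsmem n)⟩,
    hulim.comp hs, ?_⟩)
  exact hφ.comp hs

end PIAux

/-- Theorem 1, claim 3: Assumption 3′ implies the Abadie constraint qualification at
every support point: the linearized cone is contained in the tangent cone and hence,
by the standard reverse inclusion valid under continuous differentiability, the two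
cones coincide. -/
theorem assumption3'_implies_ACQ {d J J1 : ℕ} (S : PISetup d J J1)
    (hIne : S.idSet.Nonempty) (hIint : S.idSet ⊆ interior S.Θ)
    (h3' : ∀ θs ∈ S.suppSet, ∃ η > (0:ℝ), ∃ C > (0:ℝ),
      ∀ θ ∈ S.ball θs η, S.crit θ ≥ C * infDist θ S.idSet) :
    ∀ θs ∈ S.suppSet,
      S.linConeAt θs ⊆ S.tangentConeAt θs ∧ S.linConeAt θs = S.tangentConeAt θs := by
  intro θs hθs
  have hθsI : θs ∈ S.idSet := hθs.1
  have hTL : S.tangentConeAt θs ⊆ S.linConeAt θs := PIAux.TsubL S θs hθsI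
  obtain ⟨η, hη, C, hC, hcrit⟩ := h3' θs hθs
  have hLT : S.linConeAt θs ⊆ S.tangentConeAt θs :=
    PIAux.LsubT S θs hθsI hIne (hIint hθsI) η C hη hC hcrit
  exact ⟨hLT, Set.Subset.antisymm hLT hTL⟩
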